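/- Let R ∈ ℝ^{r×r} be a symmetric positive-definite matrix, f ∈ ℝ^r with f ≠ 0, d ∈ ℝ, ρ ≥ 0, and λ ∈ [0, 2]. Given h ∈ ℝ^r, set e := d − fᵀh and define the updated vector h⁺ := h + λ · sgn(e) · max{|e| − ρ, 0} / (fᵀ R⁻¹ f) · R⁻¹ f. Then for every h* ∈ ℝ^r satisfying |fᵀ h* − d| ≤ ρ, the monotone approximation property holds: (h − h*)ᵀ R (h − h*) − (h⁺ − h*)ᵀ R (h⁺ − h*) ≥ 0. -/

import Mathlib

open Matrix

lemma key_arith (e s ρ lam : ℝ) (hρ : 0 ≤ ρ) (hs : |s| ≤ ρ)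
    (hlam0 : 0 ≤ lam) (hlam2 : lam ≤ 2) :
    0 ≤ (lam * Real.sign e * max (|e| - ρ) 0) *
      (2 * (e + s) - lam * Real.sign e * max (|e| - ρ) 0) := by
  have hs1 : -ρ ≤ s := neg_le_of_abs_le hs
  have hs2 : s ≤ ρ := le_of_abs_le hs
  rcases lt_trichotomy e 0 with he | he | he
  · rw [Real.sign_of_neg he, abs_of_neg he]
    rcases le_or_gt (-e - ρ) 0 with hm | hm
    · rw [max_eq_right hm]; simp
    · rw [max_eq_left hm.le]
      have hX : 2 * (e + s) + lam * (-e - ρ) ≤ 0 := by nlinarith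
      nlinarith [mul_nonneg (mul_nonneg hlam0 hm.le) (neg_nonneg.2 hX)]
  · simp [he, max_eq_right (by simpa using hρ : |(0:ℝ)| - ρ ≤ 0)]
  · rw [Real.sign_of_pos he, abs_of_pos he]
    rcases le_or_gt (e - ρ) 0 with hm | hm
    · rw [max_eq_right hm]; simp
    · rw [max_eq_left hm.le]
      have hX : 0 ≤ 2 * (e + s) - lam * (e - ρ) := by nlinarith
      nlinarith [mul_nonneg (mul_nonneg hlam0 hm.le) hX]

theorem stmt13 {r : ℕ} (R : Matrix (Fin r) (Fin r) ℝ) (hR : R.PosDef)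
    (f : Fin r → ℝ) (hf : f ≠ 0) (d ρ lam : ℝ) (hρ : 0 ≤ ρ)
    (hlam0 : 0 ≤ lam) (hlam2 : lam ≤ 2)
    (h : Fin r → ℝ) (e : ℝ) (he : e = d - f ⬝ᵥ h)
    (h' : Fin r → ℝ)
    (hh' : h' = h + (lam * Real.sign e * max (|e| - ρ) 0 / (f ⬝ᵥ R⁻¹.mulVec f)) •
      R⁻¹.mulVec f)
    (hstar : Fin r → ℝ) (hfeas : |f ⬝ᵥ hstar - d| ≤ ρ) :
    0 ≤ (h - hstar) ⬝ᵥ R.mulVec (h - hstar) - (h' - hstar) ⬝ᵥ R.mulVec (h' - hstar) := by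
  have hdet : IsUnit R.det := isUnit_iff_ne_zero.mpr (ne_of_gt hR.det_pos)
  have hRv : R.mulVec (R⁻¹.mulVec f) = f := by
    rw [Matrix.mulVec_mulVec, Matrix.mul_nonsing_inv R hdet, Matrix.one_mulVec]
  set v := R⁻¹.mulVec f with hv
  have hq : 0 < f ⬝ᵥ v := by
    have := (hR.inv).dotProduct_mulVec_pos hf
    simpa using this
  set q := f ⬝ᵥ v with hqdef
  set t := lam * Real.sign e * max (|e| - ρ) 0 with ht
  set c := t / q with hc
  have hu : h' - hstar = (h - hstar) + c • v := by
    rw [hh']; abel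
  have hsym : ∀ u : Fin r → ℝ, v ⬝ᵥ R.mulVec u = f ⬝ᵥ u := by
    intro u
    rw [Matrix.dotProduct_mulVec, ← Matrix.mulVec_transpose,
      show Rᵀ = R from hR.1, hRv]
  have hvRv : v ⬝ᵥ R.mulVec v = q := hsym v
  set u := h - hstar with hu'
  have huf : f ⬝ᵥ u = -e - (f ⬝ᵥ hstar - d) := by
    simp only [hu', dotProduct_sub, he]; ring
  have expand : (h' - hstar) ⬝ᵥ R.mulVec (h' - hstar) =
      u ⬝ᵥ R.mulVec u + 2 * c * (f ⬝ᵥ u) + c^2 * q := by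
    rw [hu, Matrix.mulVec_add, Matrix.mulVec_smul, add_dotProduct,
      smul_dotProduct, dotProduct_add, dotProduct_add,
      dotProduct_smul, dotProduct_smul, hvRv, hsym u,
      show u ⬝ᵥ R.mulVec v = f ⬝ᵥ u by
        rw [show R.mulVec v = f from hRv]; exact dotProduct_comm u f]
    simp only [smul_eq_mul]; ring
  rw [expand, huf]
  set s := f ⬝ᵥ hstar - d with hsdef
  have hkey := key_arith e s ρ lam hρ hfeas hlam0 hlam2
  rw [← ht] at hkey
  have hD : u ⬝ᵥ R.mulVec u - (u ⬝ᵥ R.mulVec u + 2 * c * (-e - s) + c ^ 2 * q)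
      = (t * (2 * (e + s) - t)) / q := by
    rw [hc]; field_simp; ring
  rw [hD]
  exact div_nonneg hkey hq.le
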